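/- arXiv:2310.19662 — 2 statements merged into one kernel-verified Lean document; each statement's English description precedes it below -/
import Mathlib

section
/- Let μ ∈ ℝ and σ > 0, and let N(μ, σ²) denote the Gaussian distribution with mean μ and variance σ². Then the average Metropolis acceptance probabilities with the Ceperley–Dewing correction satisfy the average detailed balance identity: ∫ min{1, exp(−x − σ²/2)} dN(μ, σ²)(x) = e^{−μ} · ∫ min{1, exp(−x − σ²/2)} dN(−μ, σ²)(x). -/
open MeasureTheory ProbabilityTheory
open scoped NNReal ENNReal

lemma cd_integral_gaussian (m : ℝ) (v : ℝ≥0) (hv : v ≠ 0) (g : ℝ → ℝ) :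
    ∫ x, g x ∂(gaussianReal m v) = ∫ x, gaussianPDFReal m v x * g x := by
  rw [gaussianReal_of_var_ne_zero _ hv]
  have hm : Measurable fun x => (gaussianPDFReal m v x).toNNReal :=
    (measurable_gaussianPDFReal m v).real_toNNReal
  have : (volume : Measure ℝ).withDensity (gaussianPDF m v)
      = (volume : Measure ℝ).withDensity
        (fun x => ((gaussianPDFReal m v x).toNNReal : ℝ≥0∞)) := rfl
  rw [this, integral_withDensity_eq_integral_smul hm]
  congr 1
  ext x
  rw [NNReal.smul_def, smul_eq_mul, Real.coe_toNNReal _ (gaussianPDFReal_nonneg m v x)]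

/-- For `μ ∈ ℝ` and `σ > 0`, the average Metropolis acceptance
probabilities with the Ceperley–Dewing correction satisfy the average detailed balance
identity:
`∫ min {1, exp (−x − σ²/2)} dN(μ, σ²)(x)
  = e^{−μ} * ∫ min {1, exp (−x − σ²/2)} dN(−μ, σ²)(x)`. -/
theorem ceperley_dewing_average_detailed_balance (μ σ : ℝ) (hσ : 0 < σ) :
    ∫ x, min 1 (Real.exp (-x - σ ^ 2 / 2))
        ∂(gaussianReal μ ⟨σ ^ 2, sq_nonneg σ⟩) =
      Real.exp (-μ) *
        ∫ x, min 1 (Real.exp (-x - σ ^ 2 / 2))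
          ∂(gaussianReal (-μ) ⟨σ ^ 2, sq_nonneg σ⟩) := by
  set v : ℝ≥0 := ⟨σ ^ 2, sq_nonneg σ⟩ with hvdef
  have hσ2 : (0:ℝ) < σ ^ 2 := by positivity
  have hv : v ≠ 0 := by
    intro h
    have : (v : ℝ) = 0 := by rw [h]; simp
    simp only [hvdef, NNReal.coe_mk] at this
    exact hσ2.ne' this
  rw [cd_integral_gaussian μ v hv, cd_integral_gaussian (-μ) v hv]
  set g : ℝ → ℝ := fun x => gaussianPDFReal (-μ) v x * min 1 (Real.exp (-x - σ ^ 2 / 2))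
    with hg
  have h1 : ∫ x, g x = ∫ x, g (-(x + σ ^ 2)) := by
    rw [integral_add_right_eq_self (fun x => g (-x)) (σ ^ 2), integral_neg_eq_self]
  rw [show (integral ℙ g) = ∫ x, g x from rfl, h1, ← integral_const_mul]
  congr 1
  ext x
  have hpt : gaussianPDFReal μ v x * Real.exp (-(x + σ ^ 2 / 2))
      = Real.exp (-μ) * gaussianPDFReal (-μ) v (-(x + σ ^ 2)) := by
    simp only [gaussianPDFReal, hvdef, NNReal.coe_mk]
    rw [mul_comm (Real.exp (-μ))]
    simp only [mul_assoc, ← Real.exp_add]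
    congr 1
    change Real.exp (-(x - μ) ^ 2 / (2 * σ ^ 2) + -(x + σ ^ 2 / 2)) =
      Real.exp (-(-(x + σ ^ 2) - -μ) ^ 2 / (2 * σ ^ 2) + -μ)
    field_simp
    ring
  have hmin : ∀ t : ℝ, min 1 (Real.exp (-t)) = Real.exp (-t) * min 1 (Real.exp t) := by
    intro t
    rw [mul_min_of_nonneg _ _ (Real.exp_nonneg _), mul_one, ← Real.exp_add]
    simp [min_comm]
  have hx1 : -x - σ ^ 2 / 2 = -(x + σ ^ 2 / 2) := by ring
  have hx2 : -(-(x + σ ^ 2)) - σ ^ 2 / 2 = x + σ ^ 2 / 2 := by ring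
  simp only [hg, hx1, hx2, hmin (x + σ ^ 2 / 2)]
  rw [← mul_assoc, hpt]
  ring
end

section
/- Let μ ∈ ℝ and σ > 0, let X be a random variable with distribution N(μ, σ²), and let Φ denote the standard normal cumulative distribution function. Then E[min{1, exp(−X − σ²/2)}] = Φ(−μ/σ − σ/2) + e^{−μ} · Φ(μ/σ − σ/2). -/
open MeasureTheory ProbabilityTheory Real

/-- The standard normal cumulative distribution function
`Φ(z) = ∫_{−∞}^{z} (1/√(2π)) e^{−u²/2} du`. -/
noncomputable def stdNormalCDF (z : ℝ) : ℝ :=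
  ∫ u in Set.Iic z, (1 / Real.sqrt (2 * Real.pi)) * Real.exp (-u ^ 2 / 2)

lemma aux_phi_eq : gaussianPDFReal 0 1 =
    fun u : ℝ => (1 / Real.sqrt (2 * Real.pi)) * Real.exp (-u ^ 2 / 2) := by
  funext u
  simp [gaussianPDFReal, one_div]

lemma aux_aff_Iic (g : ℝ → ℝ) (σ m c : ℝ) (hσ : 0 < σ) :
    ∫ x in Set.Iic c, g ((x - m)/σ) = σ * ∫ u in Set.Iic ((c - m)/σ), g u := by
  have hT : MeasurableEmbedding (fun u : ℝ => σ * u + m) :=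
    (((Homeomorph.mulLeft₀ σ hσ.ne').trans
      (Homeomorph.addRight m))).isClosedEmbedding.measurableEmbedding
  have hmap : Measure.map (fun u : ℝ => σ * u + m) volume
      = ENNReal.ofReal σ⁻¹ • volume := by
    have : (fun u : ℝ => σ * u + m) = (fun x : ℝ => x + m) ∘ (fun u : ℝ => σ * u) := rfl
    rw [this, ← Measure.map_map (measurable_add_const m) (measurable_const_mul σ),
      Real.map_volume_mul_left hσ.ne', Measure.map_smul,
      map_add_right_eq_self volume m, abs_of_pos (inv_pos.2 hσ)]
  have hpre : (fun u : ℝ => σ * u + m) ⁻¹' Set.Iic c = Set.Iic ((c - m)/σ) := by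
    ext u; simp only [Set.mem_preimage, Set.mem_Iic]
    constructor <;> intro h
    · rw [le_div_iff₀ hσ]; nlinarith
    · rw [le_div_iff₀ hσ] at h; nlinarith
  have := hT.setIntegral_map (μ := volume) (g := fun x => g ((x - m)/σ)) (s := Set.Iic c)
  rw [hmap] at this
  rw [Measure.restrict_smul, integral_smul_measure] at this
  have h2 : ∀ u : ℝ, ((σ * u + m - m)/σ) = u := by
    intro u; field_simp; ring
  simp only [hpre, h2] at this
  have hσ' : (ENNReal.ofReal σ⁻¹).toReal = σ⁻¹ := ENNReal.toReal_ofReal (by positivity)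
  rw [hσ', smul_eq_mul] at this
  rw [← this, ← mul_assoc, mul_inv_cancel₀ hσ.ne', one_mul]

lemma aux_pdf_eq (m σ : ℝ) (hσ : 0 < σ) (x : ℝ) :
    gaussianPDFReal m ⟨σ ^ 2, sq_nonneg σ⟩ x
      = σ⁻¹ * ((1 / Real.sqrt (2 * Real.pi)) * Real.exp (-((x - m)/σ) ^ 2 / 2)) := by
  have hπ : 0 < Real.pi := Real.pi_pos
  unfold gaussianPDFReal
  erw [NNReal.coe_mk]
  have he : -((x - m)/σ) ^ 2 / 2 = -(x - m) ^ 2 / (2 * σ ^ 2) := by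
    rw [div_pow]; ring
  rw [he]
  have hs : Real.sqrt (2 * Real.pi * σ ^ 2) = Real.sqrt (2 * Real.pi) * σ := by
    rw [Real.sqrt_mul (by positivity), Real.sqrt_sq hσ.le]
  rw [hs]
  have h0 : Real.sqrt (2 * Real.pi) ≠ 0 := by positivity
  rw [mul_inv, one_div]
  ring

lemma aux_cdf_Iic (m σ c : ℝ) (hσ : 0 < σ) :
    ∫ x in Set.Iic c, gaussianPDFReal m ⟨σ ^ 2, sq_nonneg σ⟩ x
      = stdNormalCDF ((c - m)/σ) := by
  have h : ∀ x : ℝ, gaussianPDFReal m ⟨σ ^ 2, sq_nonneg σ⟩ x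
      = σ⁻¹ * ((1 / Real.sqrt (2 * Real.pi)) * Real.exp (-((x - m)/σ) ^ 2 / 2)) :=
    aux_pdf_eq m σ hσ
  simp_rw [h]
  rw [integral_const_mul,
    aux_aff_Iic (fun u => (1 / Real.sqrt (2 * Real.pi)) * Real.exp (-u ^ 2 / 2)) σ m c hσ,
    ← mul_assoc, inv_mul_cancel₀ hσ.ne', one_mul]
  rfl

lemma aux_cdf_symm (z : ℝ) : stdNormalCDF z +
    (∫ x in Set.Ioi z, gaussianPDFReal 0 1 x) = 1 := by
  have hint : Integrable (gaussianPDFReal 0 1) := integrable_gaussianPDFReal 0 1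
  rw [stdNormalCDF, ← aux_phi_eq,
    intervalIntegral.integral_Iic_add_Ioi hint.integrableOn hint.integrableOn]
  exact integral_gaussianPDFReal_eq_one 0 one_ne_zero

lemma aux_cdf_Ioi (m σ c : ℝ) (hσ : 0 < σ) :
    ∫ x in Set.Ioi c, gaussianPDFReal m ⟨σ ^ 2, sq_nonneg σ⟩ x
      = stdNormalCDF ((m - c)/σ) := by
  have hint : Integrable (gaussianPDFReal m ⟨σ ^ 2, sq_nonneg σ⟩) :=
    integrable_gaussianPDFReal _ _
  have hv : (⟨σ ^ 2, sq_nonneg σ⟩ : NNReal) ≠ 0 := by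
    intro h
    have := congrArg NNReal.toReal h
    exact (by positivity : (0:ℝ) < σ ^ 2).ne' this
  have htot := integral_gaussianPDFReal_eq_one m hv
  have hsplit := intervalIntegral.integral_Iic_add_Ioi (b := c) hint.integrableOn hint.integrableOn
  rw [htot, aux_cdf_Iic m σ c hσ] at hsplit
  -- so Ioi integral = 1 - Φ((c-m)/σ); use symmetry via aux_cdf_symm for std normal
  -- and the Ioi version of aux_cdf_Iic
  -- Instead: compute Ioi integral directly via symmetry of stdNormalCDF.
  have hsym : stdNormalCDF ((c - m)/σ) + stdNormalCDF ((m - c)/σ) = 1 := by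
    have h1 : stdNormalCDF ((m - c)/σ) = ∫ x in Set.Ioi ((c - m)/σ), gaussianPDFReal 0 1 x := by
      have hneg : (m - c)/σ = -((c - m)/σ) := by ring
      rw [hneg, stdNormalCDF,
        ← integral_comp_neg_Ioi ((c - m)/σ)
          (fun u => (1 / Real.sqrt (2 * Real.pi)) * Real.exp (-u ^ 2 / 2))]
      simp only [aux_phi_eq, neg_sq]
    rw [h1]
    exact aux_cdf_symm ((c - m)/σ)
  linarith

lemma aux_tilt (m σ : ℝ) (hσ : 0 < σ) (x : ℝ) :
    gaussianPDFReal m ⟨σ ^ 2, sq_nonneg σ⟩ x * Real.exp (-x - σ ^ 2 / 2)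
      = Real.exp (-m) * gaussianPDFReal (m - σ ^ 2) ⟨σ ^ 2, sq_nonneg σ⟩ x := by
  unfold gaussianPDFReal
  erw [NNReal.coe_mk]
  have hexp : -(x - m) ^ 2 / (2 * σ ^ 2) + (-x - σ ^ 2 / 2)
      = -m + -(x - (m - σ ^ 2)) ^ 2 / (2 * σ ^ 2) := by
    field_simp
    ring
  rw [mul_assoc, ← Real.exp_add, hexp, Real.exp_add]
  ring

/-- Let `μ ∈ ℝ`, `σ > 0`, and let `X` be a random variable with
distribution `N(μ, σ²)`. Then
`E[min {1, exp (−X − σ²/2)}] = Φ(−μ/σ − σ/2) + e^{−μ} · Φ(μ/σ − σ/2)`,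
where `Φ` is the standard normal CDF. -/
theorem ceperley_dewing_acceptance_expectation {Ω : Type*} [MeasurableSpace Ω]
    (P : Measure Ω) [IsProbabilityMeasure P] (μ σ : ℝ) (hσ : 0 < σ)
    (X : Ω → ℝ) (hX : Measurable X)
    (hlaw : P.map X = gaussianReal μ ⟨σ ^ 2, sq_nonneg σ⟩) :
    ∫ ω, min 1 (Real.exp (-X ω - σ ^ 2 / 2)) ∂P =
      stdNormalCDF (-μ / σ - σ / 2) +
        Real.exp (-μ) * stdNormalCDF (μ / σ - σ / 2) := by
  set v : NNReal := ⟨σ ^ 2, sq_nonneg σ⟩ with hvdef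
  have hv : v ≠ 0 := by
    intro h
    have := congrArg NNReal.toReal h
    exact (by positivity : (0:ℝ) < σ ^ 2).ne' this
  set f : ℝ → ℝ := fun x => min 1 (Real.exp (-x - σ ^ 2 / 2)) with hfdef
  have hf_cont : Continuous f :=
    continuous_const.min ((Real.continuous_exp).comp (by continuity))
  set p : ℝ → ℝ := gaussianPDFReal μ v with hpdef
  have hp_int : Integrable p := integrable_gaussianPDFReal μ v
  -- Step 1: expectation as integral over the law
  have h1 : ∫ ω, f (X ω) ∂P = ∫ x, f x ∂(gaussianReal μ v) := by
    rw [← hlaw]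
    exact (integral_map hX.aemeasurable hf_cont.aestronglyMeasurable).symm
  -- Step 2: density representation
  have h2 : ∫ x, f x ∂(gaussianReal μ v) = ∫ x, p x * f x := by
    rw [gaussianReal_of_var_ne_zero μ hv]
    have h3 : gaussianPDF μ v
        = fun x => ((Real.toNNReal (p x) : NNReal) : ENNReal) := rfl
    rw [h3, integral_withDensity_eq_integral_smul
      ((measurable_gaussianPDFReal μ v).real_toNNReal) f]
    congr 1
    funext x
    rw [NNReal.smul_def, Real.coe_toNNReal _ (gaussianPDFReal_nonneg μ v x), smul_eq_mul]
  -- Integrability of the product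
  have hbd : ∀ x, ‖f x‖ ≤ 1 := by
    intro x
    rw [Real.norm_eq_abs, abs_of_pos (lt_min one_pos (Real.exp_pos _))]
    exact min_le_left _ _
  have hint : Integrable (fun x => f x * p x) :=
    hp_int.bdd_mul hf_cont.aestronglyMeasurable (Filter.Eventually.of_forall hbd)
  have hint' : Integrable (fun x => p x * f x) := by
    simpa [mul_comm] using hint
  -- Split at c = -σ²/2
  set c : ℝ := -σ ^ 2 / 2 with hcdef
  have hsplit := intervalIntegral.integral_Iic_add_Ioi (b := c) hint'.integrableOn hint'.integrableOn
  -- Iic part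
  have hIic : ∫ x in Set.Iic c, p x * f x = stdNormalCDF (-μ / σ - σ / 2) := by
    have heq : ∀ x ∈ Set.Iic c, p x * f x = p x := by
      intro x hx
      have hx' : x ≤ -σ ^ 2 / 2 := hx
      have : (1:ℝ) ≤ Real.exp (-x - σ ^ 2 / 2) :=
        Real.one_le_exp (by linarith)
      rw [hfdef]
      simp only [min_eq_left this, mul_one]
    rw [setIntegral_congr_fun measurableSet_Iic heq, hpdef, aux_cdf_Iic μ σ c hσ]
    congr 1
    rw [hcdef]
    field_simp
    ring
  -- Ioi part
  have hIoi : ∫ x in Set.Ioi c, p x * f x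
      = Real.exp (-μ) * stdNormalCDF (μ / σ - σ / 2) := by
    have heq : ∀ x ∈ Set.Ioi c, p x * f x
        = Real.exp (-μ) * gaussianPDFReal (μ - σ ^ 2) v x := by
      intro x hx
      have hx' : c < x := hx
      have : Real.exp (-x - σ ^ 2 / 2) ≤ 1 := by
        rw [Real.exp_le_one_iff]
        rw [hcdef] at hx'
        linarith
      rw [hfdef]
      simp only [min_eq_right this]
      exact aux_tilt μ σ hσ x
    rw [setIntegral_congr_fun measurableSet_Ioi heq, integral_const_mul,
      aux_cdf_Ioi (μ - σ ^ 2) σ c hσ]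
    congr 2
    rw [hcdef]
    field_simp
    ring
  rw [h1, h2, ← hsplit, hIic, hIoi]
end
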